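/- On the Cartesian torus grid, let κ > 0, Δt > 0, let B satisfy hypothesis (H2), let r₂ = (d+2)/(d+1) and r₂' = d+2, and suppose u^{k−1}_i, u^k_i : G → ℝ and p^k_i : G → ℝ satisfy one implicit Euler finite-volume step with prescribed potentials. Then for every φ : G → ℝ, the discrete time derivative satisfies |∑_{K∈G} m(K)·(u^k_i(K) − u^{k−1}_i(K))/Δt·φ(K)| ≤ (κ·‖∇^h u^k_i‖_{0,r₂,T*} + ‖û·∇^h p^k_i‖_{0,r₂,T*})·‖∇^h φ‖_{0,r₂',T*}, where û·∇^h p^k_i is the edge function σ ↦ û_σ(u^k_i, p^k_i)·|∇^h_σ p^k_i|. In particular, ‖(u^k_i − u^{k−1}_i)/Δt‖_{−1,r₂,T} ≤ κ·‖∇^h u^k_i‖_{0,r₂,T*} + ‖û·∇^h p^k_i‖_{0,r₂,T*}, where ‖w‖_{−1,r₂,T} = sup{|∑_{K∈G} m(K)·w(K)·φ(K)| : φ : G → ℝ with ‖φ‖_{0,r₂',T} + ‖∇^h φ‖_{0,r₂',T*} = 1}. -/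

import Mathlib

open MeasureTheory Real Finset

namespace SG

instance : Fact ((0:ℝ) < 1) := ⟨one_pos⟩

variable {d : ℕ}

/-- Cells of the Cartesian torus grid. -/
abbrev Cell (M : Fin d → ℕ) := ∀ ℓ : Fin d, ZMod (M ℓ)

/-- Cell measure `m(K) = Δx₁⋯Δx_d`. -/
noncomputable def mK (M : Fin d → ℕ) : ℝ := ∏ ℓ, ((M ℓ : ℝ))⁻¹

/-- Transmissibility coefficient of an edge in direction `ℓ`:
`τ_σ = m(σ)/d_σ = m(K)·M_ℓ²`. -/
noncomputable def τ (M : Fin d → ℕ) (ℓ : Fin d) : ℝ := mK M * (M ℓ : ℝ) ^ 2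

/-- Shift a cell by `s` in direction `ℓ` (mod `M ℓ`). -/
def shift (M : Fin d → ℕ) (K : Cell M) (ℓ : Fin d) (s : ℤ) : Cell M :=
  Function.update K ℓ (K ℓ + (s : ZMod (M ℓ)))

/-- Hypothesis (H2): `B` is continuous on `[0,∞)` with `0 < B(s) ≤ 1` for `s ≥ 0`. -/
def H2 (B : ℝ → ℝ) : Prop :=
  ContinuousOn B (Set.Ici 0) ∧ ∀ s : ℝ, 0 ≤ s → 0 < B s ∧ B s ≤ 1

/-- Hypothesis (H3): `α ∈ [0,1)` and `B(s) ≥ 1 − α·s` for all `s ≥ 0`. -/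
def H3 (B : ℝ → ℝ) (α : ℝ) : Prop :=
  0 ≤ α ∧ α < 1 ∧ ∀ s : ℝ, 0 ≤ s → 1 - α * s ≤ B s

/-- The scaled weight function `B_κ(s) = κ·B(s/κ)`. -/
noncomputable def Bk (κ : ℝ) (B : ℝ → ℝ) (s : ℝ) : ℝ := κ * B (s / κ)

/-- Upwind value on the (oriented) edge from `K` to `L`. -/
noncomputable def upw {M : Fin d → ℕ} (u p : Cell M → ℝ) (K L : Cell M) : ℝ :=
  if 0 ≤ p L - p K then u L else u K

/-- Numerical flux `F_{K,σ}[u,p]` from `K` through the edge (in direction `ℓ`) to its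
neighbor `L`. -/
noncomputable def flux (M : Fin d → ℕ) (κ : ℝ) (B : ℝ → ℝ) (u p : Cell M → ℝ)
    (ℓ : Fin d) (K L : Cell M) : ℝ :=
  -(τ M ℓ) * (Bk κ B |p L - p K| * (u L - u K) + upw u p K L * (p L - p K))

/-- Sum of the numerical fluxes over the `2d` edges incident to `K`. -/
noncomputable def fluxSum (M : Fin d → ℕ) (κ : ℝ) (B : ℝ → ℝ) (u p : Cell M → ℝ)
    (K : Cell M) : ℝ :=
  ∑ ℓ : Fin d, (flux M κ B u p ℓ K (shift M K ℓ 1) + flux M κ B u p ℓ K (shift M K ℓ (-1)))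

/-- One implicit Euler finite-volume step with prescribed potential `p`. -/
def Step (M : Fin d → ℕ) (κ Δt : ℝ) (B : ℝ → ℝ) (uPrev u p : Cell M → ℝ) : Prop :=
  ∀ K : Cell M, mK M * (u K - uPrev K) / Δt + fluxSum M κ B u p K = 0

/-- Discrete Boltzmann entropy. -/
noncomputable def HB (M : Fin d → ℕ) [∀ ℓ, NeZero (M ℓ)] {n : ℕ}
    (u : Fin n → Cell M → ℝ) : ℝ :=
  ∑ i, ∑ K : Cell M, mK M * (u i K * (Real.log (u i K) - 1))

/-- Discrete Rao entropy associated to discrete kernels `Wd`. -/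
noncomputable def HR (M : Fin d → ℕ) [∀ ℓ, NeZero (M ℓ)] {n : ℕ}
    (Wd : Fin n → Fin n → Cell M → Cell M → ℝ) (u : Fin n → Cell M → ℝ) : ℝ :=
  (1/2) * ∑ i, ∑ j, ∑ K : Cell M, ∑ J : Cell M,
    mK M * mK M * Wd i j K J * u i K * u j J

/-- Boltzmann entropy production term `P_B`. -/
noncomputable def PB (M : Fin d → ℕ) [∀ ℓ, NeZero (M ℓ)] {n : ℕ} (κ : ℝ) (B : ℝ → ℝ)
    (u p : Fin n → Cell M → ℝ) : ℝ :=
  4 * ∑ i, ∑ K : Cell M, ∑ ℓ : Fin d,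
    τ M ℓ * Bk κ B |p i (shift M K ℓ 1) - p i K| *
      (Real.sqrt (u i (shift M K ℓ 1)) - Real.sqrt (u i K)) ^ 2

/-- Rao entropy production term `P_R`. -/
noncomputable def PR (M : Fin d → ℕ) [∀ ℓ, NeZero (M ℓ)] {n : ℕ}
    (u p : Fin n → Cell M → ℝ) : ℝ :=
  ∑ i, ∑ K : Cell M, ∑ ℓ : Fin d,
    τ M ℓ * upw (u i) (p i) K (shift M K ℓ 1) * (p i (shift M K ℓ 1) - p i K) ^ 2

/-- Cross term `X(u,p)`. -/
noncomputable def Xc (M : Fin d → ℕ) [∀ ℓ, NeZero (M ℓ)] {n : ℕ}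
    (u p : Fin n → Cell M → ℝ) : ℝ :=
  ∑ i, ∑ K : Cell M, ∑ ℓ : Fin d,
    τ M ℓ * (p i (shift M K ℓ 1) - p i K) * (u i (shift M K ℓ 1) - u i K)

/-- Discrete Fisher information `∑_i ∑_σ τ_σ |D_σ √u_i|²`. -/
noncomputable def Fisher (M : Fin d → ℕ) [∀ ℓ, NeZero (M ℓ)] {n : ℕ}
    (u : Fin n → Cell M → ℝ) : ℝ :=
  ∑ i, ∑ K : Cell M, ∑ ℓ : Fin d,
    τ M ℓ * (Real.sqrt (u i (shift M K ℓ 1)) - Real.sqrt (u i K)) ^ 2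

/-- The torus `T^d = (ℝ/ℤ)^d`. -/
abbrev Td (d : ℕ) := Fin d → AddCircle (1 : ℝ)

/-- The box `Q_K ⊆ T^d` corresponding to the cell `K`. -/
noncomputable def QK (M : Fin d → ℕ) (K : Cell M) : Set (Td d) :=
  Set.univ.pi fun ℓ => (fun t : ℝ => (t : AddCircle (1 : ℝ))) ''
    Set.Ico (((K ℓ).val : ℝ) / (M ℓ)) ((((K ℓ).val : ℝ) + 1) / (M ℓ))

/-- The discrete kernel `W_{KJ} = (m(K)m(J))⁻¹ ∫_{Q_K}∫_{Q_J} W(x−y) dy dx`. -/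
noncomputable def Wdisc (M : Fin d → ℕ) (W : Td d → ℝ) (K J : Cell M) : ℝ :=
  (mK M * mK M)⁻¹ * ∫ x in QK M K, ∫ y in QK M J, W (x - y)

/-- The discrete nonlocal potential `p_i(K) = ∑_j ∑_J m(J)·Wd^{ij}_{KJ}·u_j(J)`. -/
noncomputable def pot (M : Fin d → ℕ) [∀ ℓ, NeZero (M ℓ)] {n : ℕ}
    (Wd : Fin n → Fin n → Cell M → Cell M → ℝ) (u : Fin n → Cell M → ℝ)
    (i : Fin n) (K : Cell M) : ℝ :=
  ∑ j, ∑ J : Cell M, mK M * Wd i j K J * u j J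

/-- Discrete `L^q` norm of a cell function. -/
noncomputable def normq (M : Fin d → ℕ) [∀ ℓ, NeZero (M ℓ)] (q : ℝ)
    (u : Cell M → ℝ) : ℝ :=
  (∑ K : Cell M, mK M * |u K| ^ q) ^ (1/q)

/-- Discrete `L^q` norm of an edge function (dual-cell measure `m(Δ_σ) = m(σ)·d_σ = m(K)`). -/
noncomputable def enorm (M : Fin d → ℕ) [∀ ℓ, NeZero (M ℓ)] (q : ℝ)
    (w : Cell M → Fin d → ℝ) : ℝ :=
  (∑ K : Cell M, ∑ ℓ : Fin d, mK M * |w K ℓ| ^ q) ^ (1/q)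

/-- Magnitude of the discrete gradient on the edge `(K,ℓ)`:
`|∇^h_σ v| = d·D_σ v/d_σ`. -/
noncomputable def gradh (M : Fin d → ℕ) (v : Cell M → ℝ) (K : Cell M) (ℓ : Fin d) : ℝ :=
  d * (M ℓ : ℝ) * |v (shift M K ℓ 1) - v K|


-- auxiliary lemmas
lemma mK_pos (M : Fin d → ℕ) [∀ ℓ, NeZero (M ℓ)] : 0 < mK M :=
  Finset.prod_pos fun ℓ _ => inv_pos.2 (by exact_mod_cast Nat.pos_of_ne_zero (NeZero.ne (M ℓ)))

lemma τ_nonneg (M : Fin d → ℕ) [∀ ℓ, NeZero (M ℓ)] (ℓ : Fin d) : 0 ≤ τ M ℓ :=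
  mul_nonneg (mK_pos M).le (sq_nonneg _)

lemma shift_add (M : Fin d → ℕ) (K : Cell M) (ℓ : Fin d) (s t : ℤ) :
    shift M (shift M K ℓ s) ℓ t = shift M K ℓ (s + t) := by
  funext j
  by_cases h : j = ℓ
  · subst h
    simp [shift, Function.update_self]
    push_cast
    ring
  · simp [shift, Function.update_of_ne h]

lemma shift_zero (M : Fin d → ℕ) (K : Cell M) (ℓ : Fin d) : shift M K ℓ 0 = K := by
  funext j
  by_cases h : j = ℓ
  · subst h; simp [shift, Function.update_self]
  · simp [shift, Function.update_of_ne h]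

lemma shift_cancel (M : Fin d → ℕ) (K : Cell M) (ℓ : Fin d) :
    shift M (shift M K ℓ 1) ℓ (-1) = K := by
  rw [shift_add]; norm_num [shift_zero]

lemma shift_bijective (M : Fin d → ℕ) (ℓ : Fin d) :
    Function.Bijective (fun K : Cell M => shift M K ℓ 1) :=
  Function.bijective_iff_has_inverse.mpr
    ⟨fun K => shift M K ℓ (-1),
     fun K => by simp only [shift_add]; norm_num [shift_zero],
     fun K => by simp only [shift_add]; norm_num [shift_zero]⟩

lemma upw_skew {M : Fin d → ℕ} (u p : Cell M → ℝ) (K L : Cell M) :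
    upw u p L K * (p K - p L) = -(upw u p K L * (p L - p K)) := by
  unfold upw
  rcases lt_trichotomy (p K) (p L) with h | h | h
  · rw [if_neg (by linarith), if_pos (by linarith)]; ring
  · simp [h]
  · rw [if_pos (by linarith), if_neg (by linarith)]; ring

lemma flux_antisymm (M : Fin d → ℕ) (κ : ℝ) (B : ℝ → ℝ) (u p : Cell M → ℝ)
    (ℓ : Fin d) (K L : Cell M) :
    flux M κ B u p ℓ L K = - flux M κ B u p ℓ K L := by
  unfold flux
  rw [abs_sub_comm (p K) (p L), upw_skew u p K L]
  ring

lemma Bk_nonneg {κ : ℝ} (hκ : 0 < κ) {B : ℝ → ℝ} (hB : H2 B) {s : ℝ} (hs : 0 ≤ s) :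
    0 ≤ Bk κ B s :=
  mul_nonneg hκ.le (hB.2 (s / κ) (div_nonneg hs hκ.le)).1.le

lemma Bk_le {κ : ℝ} (hκ : 0 < κ) {B : ℝ → ℝ} (hB : H2 B) {s : ℝ} (hs : 0 ≤ s) :
    Bk κ B s ≤ κ := by
  have h := (hB.2 (s / κ) (div_nonneg hs hκ.le)).2
  calc κ * B (s/κ) ≤ κ * 1 := mul_le_mul_of_nonneg_left h hκ.le
    _ = κ := mul_one κ

lemma flux_abs_le (M : Fin d → ℕ) [∀ ℓ, NeZero (M ℓ)] {κ : ℝ} (hκ : 0 < κ)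
    {B : ℝ → ℝ} (hB : H2 B) (u p : Cell M → ℝ) (ℓ : Fin d) (K L : Cell M) :
    |flux M κ B u p ℓ K L|
      ≤ τ M ℓ * (κ * |u L - u K| + |upw u p K L| * |p L - p K|) := by
  have hτ := τ_nonneg M ℓ
  have h0 : (0:ℝ) ≤ |p L - p K| := abs_nonneg _
  have hBk0 := Bk_nonneg hκ hB h0
  have hBk1 := Bk_le hκ hB h0
  unfold flux
  rw [neg_mul, abs_neg, abs_mul, abs_of_nonneg hτ]
  refine mul_le_mul_of_nonneg_left ?_ hτ
  calc |Bk κ B |p L - p K| * (u L - u K) + upw u p K L * (p L - p K)|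
      ≤ |Bk κ B |p L - p K| * (u L - u K)| + |upw u p K L * (p L - p K)| := abs_add_le _ _
    _ = Bk κ B |p L - p K| * |u L - u K| + |upw u p K L| * |p L - p K| := by
        rw [abs_mul, abs_mul, abs_of_nonneg hBk0]
    _ ≤ κ * |u L - u K| + |upw u p K L| * |p L - p K| := by
        gcongr

lemma gradh_nonneg (M : Fin d → ℕ) (v : Cell M → ℝ) (K : Cell M) (ℓ : Fin d) :
    0 ≤ gradh M v K ℓ :=
  mul_nonneg (mul_nonneg (Nat.cast_nonneg d) (Nat.cast_nonneg _)) (abs_nonneg _)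

lemma summand_bound (M : Fin d → ℕ) [∀ ℓ, NeZero (M ℓ)] (hd : 1 ≤ d) {κ : ℝ} (hκ : 0 < κ)
    {B : ℝ → ℝ} (hB : H2 B) (u p φ : Cell M → ℝ) (ℓ : Fin d) (K : Cell M) :
    |flux M κ B u p ℓ K (shift M K ℓ 1) * (φ (shift M K ℓ 1) - φ K)|
      ≤ mK M * ((κ * gradh M u K ℓ + |upw u p K (shift M K ℓ 1) * gradh M p K ℓ|)
          * gradh M φ K ℓ) := by
  set L := shift M K ℓ 1 with hL
  have hflux := flux_abs_le M hκ hB u p ℓ K L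
  have hm := (mK_pos M).le
  have hd1 : (1:ℝ) ≤ (d:ℝ) := by exact_mod_cast hd
  rw [abs_mul]
  calc |flux M κ B u p ℓ K L| * |φ L - φ K|
      ≤ (τ M ℓ * (κ * |u L - u K| + |upw u p K L| * |p L - p K|)) * |φ L - φ K| := by
        gcongr
    _ ≤ mK M * ((κ * gradh M u K ℓ + |upw u p K L * gradh M p K ℓ|) * gradh M φ K ℓ) := by
        have habs : |upw u p K L * gradh M p K ℓ| = |upw u p K L| * gradh M p K ℓ := by
          rw [abs_mul, abs_of_nonneg (gradh_nonneg M p K ℓ)]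
        rw [habs]
        unfold τ gradh
        rw [← hL]
        have hS : 0 ≤ (κ * |u L - u K| + |upw u p K L| * |p L - p K|) * |φ L - φ K| :=
          mul_nonneg (add_nonneg (mul_nonneg hκ.le (abs_nonneg _))
            (mul_nonneg (abs_nonneg _) (abs_nonneg _))) (abs_nonneg _)
        have h1 : (1:ℝ) ≤ (d:ℝ)*(d:ℝ) := by nlinarith
        calc mK M * (M ℓ:ℝ)^2 * (κ * |u L - u K| + |upw u p K L| * |p L - p K|) * |φ L - φ K|
            = mK M * (M ℓ:ℝ)^2 * ((κ * |u L - u K| + |upw u p K L| * |p L - p K|) * |φ L - φ K|) := by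
              ring
          _ ≤ (d:ℝ)*(d:ℝ) * (mK M * (M ℓ:ℝ)^2 * ((κ * |u L - u K| + |upw u p K L| * |p L - p K|) * |φ L - φ K|)) :=
              le_mul_of_one_le_left (mul_nonneg (mul_nonneg hm (sq_nonneg _)) hS) h1
          _ = mK M * ((κ * ((d:ℝ) * (M ℓ:ℝ) * |u L - u K|) + |upw u p K L| * ((d:ℝ) * (M ℓ:ℝ) * |p L - p K|)) * ((d:ℝ) * (M ℓ:ℝ) * |φ L - φ K|)) := by
              ring

lemma weighted_holder {ι : Type*} [Fintype ι] {p q : ℝ} (hpq : Real.HolderConjugate p q)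
    (w a b : ι → ℝ) (hw : ∀ i, 0 < w i) (ha : ∀ i, 0 ≤ a i) (hb : ∀ i, 0 ≤ b i) :
    ∑ i, w i * (a i * b i)
      ≤ (∑ i, w i * a i ^ p) ^ (1/p) * (∑ i, w i * b i ^ q) ^ (1/q) := by
  have hp := hpq.pos
  have hq := hpq.symm.pos
  have h := Real.inner_le_Lp_mul_Lq_of_nonneg (s := Finset.univ)
    (f := fun i => w i ^ (1/p) * a i) (g := fun i => w i ^ (1/q) * b i) hpq
    (fun i _ => mul_nonneg (Real.rpow_nonneg (hw i).le _) (ha i))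
    (fun i _ => mul_nonneg (Real.rpow_nonneg (hw i).le _) (hb i))
  calc ∑ i, w i * (a i * b i)
      = ∑ i, (w i ^ (1/p) * a i) * (w i ^ (1/q) * b i) := by
        refine Finset.sum_congr rfl fun i _ => ?_
        rw [show w i ^ (1/p) * a i * (w i ^ (1/q) * b i)
            = (w i ^ (1/p) * w i ^ (1/q)) * (a i * b i) by ring,
          ← Real.rpow_add (hw i)]
        rw [show 1/p + 1/q = 1 by
          rw [one_div, one_div]; exact hpq.inv_add_inv_eq_one]
        rw [Real.rpow_one]
    _ ≤ (∑ i, (w i ^ (1/p) * a i) ^ p) ^ (1/p) * (∑ i, (w i ^ (1/q) * b i) ^ q) ^ (1/q) := h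
    _ = (∑ i, w i * a i ^ p) ^ (1/p) * (∑ i, w i * b i ^ q) ^ (1/q) := by
        congr 1 <;> congr 1 <;> refine Finset.sum_congr rfl fun i _ => ?_
        · rw [Real.mul_rpow (Real.rpow_nonneg (hw i).le _) (ha i),
            ← Real.rpow_mul (hw i).le, one_div, inv_mul_cancel₀ hp.ne', Real.rpow_one]
        · rw [Real.mul_rpow (Real.rpow_nonneg (hw i).le _) (hb i),
            ← Real.rpow_mul (hw i).le, one_div, inv_mul_cancel₀ hq.ne', Real.rpow_one]
lemma enorm_nonneg (M : Fin d → ℕ) [∀ ℓ, NeZero (M ℓ)] (q : ℝ) (w : Cell M → Fin d → ℝ) :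
    0 ≤ enorm M q w :=
  Real.rpow_nonneg (Finset.sum_nonneg fun K _ => Finset.sum_nonneg fun ℓ _ =>
    mul_nonneg (mK_pos M).le (Real.rpow_nonneg (abs_nonneg _) _)) _

lemma normq_nonneg (M : Fin d → ℕ) [∀ ℓ, NeZero (M ℓ)] (q : ℝ) (v : Cell M → ℝ) :
    0 ≤ normq M q v :=
  Real.rpow_nonneg (Finset.sum_nonneg fun K _ =>
    mul_nonneg (mK_pos M).le (Real.rpow_nonneg (abs_nonneg _) _)) _

/-- bound for the discrete time derivative in the discrete dual norm. -/
theorem discrete_time_derivative_bound {d : ℕ} (hd : 1 ≤ d) (M : Fin d → ℕ)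
    [∀ ℓ, NeZero (M ℓ)]
    (κ Δt : ℝ) (hκ : 0 < κ) (hΔt : 0 < Δt)
    (B : ℝ → ℝ) (hB : H2 B)
    (uprev u p : Cell M → ℝ)
    (hstep : Step M κ Δt B uprev u p)
    (r₂ r₂' : ℝ) (hr₂ : r₂ = ((d:ℝ) + 2) / (d + 1)) (hr₂' : r₂' = (d:ℝ) + 2) :
    (∀ φ : Cell M → ℝ,
      |∑ K : Cell M, mK M * ((u K - uprev K) / Δt) * φ K|
        ≤ (κ * enorm M r₂ (gradh M u)
            + enorm M r₂ (fun K ℓ => upw u p K (shift M K ℓ 1) * gradh M p K ℓ))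
          * enorm M r₂' (gradh M φ)) ∧
    sSup {r : ℝ | ∃ φ : Cell M → ℝ,
          normq M r₂' φ + enorm M r₂' (gradh M φ) = 1 ∧
          r = |∑ K : Cell M, mK M * ((u K - uprev K) / Δt) * φ K|}
      ≤ κ * enorm M r₂ (gradh M u)
          + enorm M r₂ (fun K ℓ => upw u p K (shift M K ℓ 1) * gradh M p K ℓ) := by
  have hd1 : (1:ℝ) ≤ (d:ℝ) := by exact_mod_cast hd
  have hpq : Real.HolderConjugate r₂ r₂' := by
    rw [Real.holderConjugate_iff]
    constructor
    · rw [hr₂, one_lt_div (by linarith)]; linarith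
    · rw [hr₂, hr₂', inv_div]
      have h2 : (d:ℝ) + 2 ≠ 0 := by linarith
      field_simp
      ring
  set A := κ * enorm M r₂ (gradh M u) with hA
  set Bv := enorm M r₂ (fun K ℓ => upw u p K (shift M K ℓ 1) * gradh M p K ℓ) with hBv
  have hAB : 0 ≤ A + Bv :=
    add_nonneg (mul_nonneg hκ.le (enorm_nonneg M r₂ _)) (enorm_nonneg M r₂ _)
  have key : ∀ φ : Cell M → ℝ,
      |∑ K : Cell M, mK M * ((u K - uprev K) / Δt) * φ K|
        ≤ (A + Bv) * enorm M r₂' (gradh M φ) := by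
    intro φ
    have h1 : ∀ K, mK M * ((u K - uprev K) / Δt) = -fluxSum M κ B u p K := by
      intro K
      have h := hstep K
      rw [mul_div_assoc] at h
      linarith
    have reindex : ∀ ℓ : Fin d,
        ∑ K : Cell M, flux M κ B u p ℓ K (shift M K ℓ (-1)) * φ K
        = ∑ K : Cell M, -(flux M κ B u p ℓ K (shift M K ℓ 1) * φ (shift M K ℓ 1)) := by
      intro ℓ
      refine (Fintype.sum_bijective (fun K => shift M K ℓ 1) (shift_bijective M ℓ)
        _ _ fun K => ?_).symm
      rw [shift_cancel M K ℓ, flux_antisymm]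
      ring
    have sbp : ∑ K : Cell M, fluxSum M κ B u p K * φ K
        = ∑ K : Cell M, ∑ ℓ : Fin d,
            flux M κ B u p ℓ K (shift M K ℓ 1) * (φ K - φ (shift M K ℓ 1)) := by
      calc ∑ K : Cell M, fluxSum M κ B u p K * φ K
          = ∑ K : Cell M, ∑ ℓ : Fin d,
              (flux M κ B u p ℓ K (shift M K ℓ 1) * φ K
                + flux M κ B u p ℓ K (shift M K ℓ (-1)) * φ K) := by
            refine Finset.sum_congr rfl fun K _ => ?_
            rw [fluxSum, Finset.sum_mul]
            exact Finset.sum_congr rfl fun ℓ _ => add_mul _ _ _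
        _ = (∑ K : Cell M, ∑ ℓ : Fin d, flux M κ B u p ℓ K (shift M K ℓ 1) * φ K)
            + ∑ K : Cell M, ∑ ℓ : Fin d, flux M κ B u p ℓ K (shift M K ℓ (-1)) * φ K := by
            simp only [Finset.sum_add_distrib]
        _ = (∑ K : Cell M, ∑ ℓ : Fin d, flux M κ B u p ℓ K (shift M K ℓ 1) * φ K)
            + ∑ K : Cell M, ∑ ℓ : Fin d,
                -(flux M κ B u p ℓ K (shift M K ℓ 1) * φ (shift M K ℓ 1)) := by
            congr 1
            rw [Finset.sum_comm]
            rw [Finset.sum_congr rfl fun ℓ _ => reindex ℓ]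
            rw [Finset.sum_comm]
        _ = ∑ K : Cell M, ∑ ℓ : Fin d,
              flux M κ B u p ℓ K (shift M K ℓ 1) * (φ K - φ (shift M K ℓ 1)) := by
            rw [← Finset.sum_add_distrib]
            refine Finset.sum_congr rfl fun K _ => ?_
            rw [← Finset.sum_add_distrib]
            exact Finset.sum_congr rfl fun ℓ _ => by ring
    have h2 : ∑ K : Cell M, mK M * ((u K - uprev K) / Δt) * φ K
        = ∑ K : Cell M, ∑ ℓ : Fin d,
            flux M κ B u p ℓ K (shift M K ℓ 1) * (φ (shift M K ℓ 1) - φ K) := by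
      calc ∑ K : Cell M, mK M * ((u K - uprev K) / Δt) * φ K
          = ∑ K : Cell M, -(fluxSum M κ B u p K * φ K) := by
            refine Finset.sum_congr rfl fun K _ => ?_
            rw [h1 K]; ring
        _ = -∑ K : Cell M, fluxSum M κ B u p K * φ K := by
            rw [Finset.sum_neg_distrib]
        _ = -∑ K : Cell M, ∑ ℓ : Fin d,
              flux M κ B u p ℓ K (shift M K ℓ 1) * (φ K - φ (shift M K ℓ 1)) := by
            rw [sbp]
        _ = ∑ K : Cell M, ∑ ℓ : Fin d,
              flux M κ B u p ℓ K (shift M K ℓ 1) * (φ (shift M K ℓ 1) - φ K) := by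
            rw [← Finset.sum_neg_distrib]
            refine Finset.sum_congr rfl fun K _ => ?_
            rw [← Finset.sum_neg_distrib]
            exact Finset.sum_congr rfl fun ℓ _ => by ring
    rw [h2]
    have habs : |∑ K : Cell M, ∑ ℓ : Fin d,
          flux M κ B u p ℓ K (shift M K ℓ 1) * (φ (shift M K ℓ 1) - φ K)|
        ≤ ∑ K : Cell M, ∑ ℓ : Fin d,
            mK M * ((κ * gradh M u K ℓ
              + |upw u p K (shift M K ℓ 1) * gradh M p K ℓ|) * gradh M φ K ℓ) := by
      refine (Finset.abs_sum_le_sum_abs _ _).trans ?_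
      refine Finset.sum_le_sum fun K _ => ?_
      refine (Finset.abs_sum_le_sum_abs _ _).trans ?_
      exact Finset.sum_le_sum fun ℓ _ => summand_bound M hd hκ hB u p φ ℓ K
    refine habs.trans ?_
    have hgu : ∀ (v : Cell M → ℝ) (K : Cell M) (ℓ : Fin d), |gradh M v K ℓ| = gradh M v K ℓ :=
      fun v K ℓ => abs_of_nonneg (gradh_nonneg M v K ℓ)
    have holder1 : ∑ K : Cell M, ∑ ℓ : Fin d, mK M * (gradh M u K ℓ * gradh M φ K ℓ)
        ≤ enorm M r₂ (gradh M u) * enorm M r₂' (gradh M φ) := by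
      have h := weighted_holder hpq (fun _ : Cell M × Fin d => mK M)
        (fun i => gradh M u i.1 i.2) (fun i => gradh M φ i.1 i.2)
        (fun _ => mK_pos M) (fun i => gradh_nonneg M u i.1 i.2)
        (fun i => gradh_nonneg M φ i.1 i.2)
      rw [Fintype.sum_prod_type, Fintype.sum_prod_type, Fintype.sum_prod_type] at h
      simp only [enorm]
      simp_rw [hgu]
      exact h
    have holder2 : ∑ K : Cell M, ∑ ℓ : Fin d,
          mK M * (|upw u p K (shift M K ℓ 1) * gradh M p K ℓ| * gradh M φ K ℓ)
        ≤ Bv * enorm M r₂' (gradh M φ) := by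
      have h := weighted_holder hpq (fun _ : Cell M × Fin d => mK M)
        (fun i => |upw u p i.1 (shift M i.1 i.2 1) * gradh M p i.1 i.2|)
        (fun i => gradh M φ i.1 i.2)
        (fun _ => mK_pos M) (fun i => abs_nonneg _)
        (fun i => gradh_nonneg M φ i.1 i.2)
      rw [Fintype.sum_prod_type, Fintype.sum_prod_type, Fintype.sum_prod_type] at h
      rw [hBv]
      simp only [enorm]
      simp_rw [hgu]
      exact h
    calc ∑ K : Cell M, ∑ ℓ : Fin d,
          mK M * ((κ * gradh M u K ℓ
            + |upw u p K (shift M K ℓ 1) * gradh M p K ℓ|) * gradh M φ K ℓ)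
        = κ * (∑ K : Cell M, ∑ ℓ : Fin d, mK M * (gradh M u K ℓ * gradh M φ K ℓ))
          + ∑ K : Cell M, ∑ ℓ : Fin d,
              mK M * (|upw u p K (shift M K ℓ 1) * gradh M p K ℓ| * gradh M φ K ℓ) := by
          simp only [Finset.mul_sum, ← Finset.sum_add_distrib]
          refine Finset.sum_congr rfl fun K _ => Finset.sum_congr rfl fun ℓ _ => by ring
      _ ≤ κ * (enorm M r₂ (gradh M u) * enorm M r₂' (gradh M φ)) + Bv * enorm M r₂' (gradh M φ) :=
          add_le_add (mul_le_mul_of_nonneg_left holder1 hκ.le) holder2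
      _ = (A + Bv) * enorm M r₂' (gradh M φ) := by rw [hA]; ring
  refine ⟨key, Real.sSup_le ?_ hAB⟩
  rintro r ⟨φ, hφ, rfl⟩
  have hC : enorm M r₂' (gradh M φ) ≤ 1 := by
    have := normq_nonneg M r₂' φ
    linarith
  calc |∑ K : Cell M, mK M * ((u K - uprev K) / Δt) * φ K|
      ≤ (A + Bv) * enorm M r₂' (gradh M φ) := key φ
    _ ≤ (A + Bv) * 1 := mul_le_mul_of_nonneg_left hC hAB
    _ = A + Bv := mul_one _


end SG
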